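/- arXiv:1512.07813 — 2 statements merged into one kernel-verified Lean document; each statement's English description precedes it below -/
import Mathlib

section
/- Let V be a finite-dimensional real inner product space and let α₁, …, αₙ ∈ V be linearly independent. For every λ ∈ V that is dominant with respect to α₁, …, αₙ (i.e. ⟨λ, αᵢ⟩ ≥ 0 for all i), the set of vectors μ ∈ V such that μ is dominant with respect to α₁, …, αₙ and λ − μ = Σᵢ cᵢ αᵢ for some natural numbers c₁, …, cₙ is finite. -/
open RealInnerProductSpace

/-- For linearly independent `α i` and a dominant vector `lam`, the set of dominant
vectors `mu` with `lam - mu` a nonnegative integral combination of the `α i` is finite. -/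
theorem finite_dominant_below
    {V : Type*} [NormedAddCommGroup V] [InnerProductSpace ℝ V] [FiniteDimensional ℝ V]
    {n : ℕ} (α : Fin n → V) (hα : LinearIndependent ℝ α)
    (lam : V) (hlam : ∀ i, 0 ≤ ⟪lam, α i⟫) :
    {mu : V | (∀ i, 0 ≤ ⟪mu, α i⟫) ∧
      ∃ c : Fin n → ℕ, lam - mu = ∑ i, (c i : ℝ) • α i}.Finite := by
  classical
  -- the linear map sending coefficients to the combination
  let g : (Fin n → ℝ) →ₗ[ℝ] V :=
    { toFun := fun c => ∑ i, c i • α i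
      map_add' := by intro x y; simp [add_smul, Finset.sum_add_distrib]
      map_smul' := by intro r x; simp [smul_smul, Finset.smul_sum] }
  have hginj : Function.Injective g := by
    rw [injective_iff_map_eq_zero]
    intro x hx
    funext i
    exact Fintype.linearIndependent_iff.mp hα x hx i
  -- antilipschitz bound via the continuous inverse on the range
  let e := LinearEquiv.ofInjective g hginj
  let f := (e.symm.toLinearMap).toContinuousLinearMap
  have hbound : ∀ x : Fin n → ℝ, ‖x‖ ≤ ‖f‖ * ‖g x‖ := by
    intro x
    have h1 : f (e x) = x := e.symm_apply_apply x
    have h2 : ‖f (e x)‖ ≤ ‖f‖ * ‖e x‖ := f.le_opNorm _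
    have h3 : ‖e x‖ = ‖g x‖ := congrArg norm (LinearEquiv.ofInjective_apply g (h := hginj) x)
    rw [h1, h3] at h2
    exact h2
  set N : ℕ := ⌊‖f‖ * (2 * ‖lam‖)⌋₊ with hN
  have hTfin : {c : Fin n → ℕ | ∀ i, c i ≤ N}.Finite := by
    have : {c : Fin n → ℕ | ∀ i, c i ≤ N} ⊆ Set.pi Set.univ (fun _ : Fin n => Set.Iic N) := by
      intro c hc i _
      exact hc i
    exact (Set.Finite.pi (fun _ => Set.finite_Iic N)).subset this
  apply ((hTfin.image (fun c : Fin n → ℕ => lam - ∑ i, (c i : ℝ) • α i))).subset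
  rintro mu ⟨hdom, c, hc⟩
  refine ⟨c, ?_, by dsimp only; rw [← hc]; abel⟩
  -- show each c i ≤ N
  have hmu_norm : ‖mu‖ ≤ ‖lam‖ := by
    have hpos : 0 ≤ ⟪mu, lam - mu⟫ := by
      rw [hc, inner_sum]
      apply Finset.sum_nonneg
      intro i _
      rw [real_inner_smul_right]
      exact mul_nonneg (Nat.cast_nonneg _) (hdom i)
    rw [inner_sub_right, real_inner_self_eq_norm_sq] at hpos
    have hCS : ⟪mu, lam⟫ ≤ ‖mu‖ * ‖lam‖ := real_inner_le_norm mu lam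
    nlinarith [norm_nonneg mu, norm_nonneg lam]
  have hsum_norm : ‖∑ i, (c i : ℝ) • α i‖ ≤ 2 * ‖lam‖ := by
    rw [← hc]
    calc ‖lam - mu‖ ≤ ‖lam‖ + ‖mu‖ := norm_sub_le _ _
      _ ≤ 2 * ‖lam‖ := by linarith
  intro i
  have hgc : g (fun i => (c i : ℝ)) = ∑ i, (c i : ℝ) • α i := rfl
  have h1 : ‖(fun i => (c i : ℝ))‖ ≤ ‖f‖ * (2 * ‖lam‖) := by
    calc ‖(fun i => (c i : ℝ))‖ ≤ ‖f‖ * ‖g (fun i => (c i : ℝ))‖ := hbound _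
      _ ≤ ‖f‖ * (2 * ‖lam‖) := by
          rw [hgc]
          exact mul_le_mul_of_nonneg_left hsum_norm (norm_nonneg f)
  have h2 : (c i : ℝ) ≤ ‖(fun i => (c i : ℝ))‖ := by
    have := norm_le_pi_norm (fun i => (c i : ℝ)) i
    simpa [abs_of_nonneg (Nat.cast_nonneg (c i) : (0:ℝ) ≤ c i)] using this
  exact Nat.le_floor (le_trans h2 h1)
end

section
/- Let V be a finite-dimensional real inner product space and let α₁, …, αₙ ∈ V be linearly independent. Define a relation ≺ on the set D = {μ ∈ V : ⟨μ, αᵢ⟩ ≥ 0 for all i} of dominant vectors by: μ ≺ λ if and only if λ − μ is a nonzero combination Σᵢ cᵢ αᵢ with all cᵢ ∈ ℕ. Then the relation ≺ on D is well-founded: there is no infinite strictly descending sequence λ ≻ μ₁ ≻ μ₂ ≻ ⋯ of dominant vectors. -/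
open RealInnerProductSpace

/-- On the set of dominant vectors, the relation "`mu ≺ lam` iff `lam - mu` is a nonzero
nonnegative integral combination of the linearly independent vectors `α i`"
is well-founded. -/
theorem wellFounded_dominance_order
    {V : Type*} [NormedAddCommGroup V] [InnerProductSpace ℝ V] [FiniteDimensional ℝ V]
    {n : ℕ} (α : Fin n → V) (hα : LinearIndependent ℝ α) :
    WellFounded (fun (mu lam : {v : V // ∀ i, 0 ≤ ⟪v, α i⟫}) =>
      ∃ c : Fin n → ℕ, (lam : V) - (mu : V) = ∑ i, (c i : ℝ) • α i ∧
        (lam : V) - (mu : V) ≠ 0) := by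
  classical
  set W := Submodule.span ℝ (Set.range α) with hW
  let b : Module.Basis (Fin n) ℝ W := Module.Basis.span hα
  let g : W →ₗ[ℝ] ℝ := b.sumCoords
  let gC : W →L[ℝ] ℝ := LinearMap.toContinuousLinearMap g
  let F : V →L[ℝ] ℝ := gC.comp (W.orthogonalProjectionOnto)
  have hFα : ∀ i, F (α i) = 1 := by
    intro i
    have h2 : ((b i : W) : V) = α i := congrArg Subtype.val (Module.Basis.span_apply hα i)
    have h1 : W.orthogonalProjectionOnto (α i) = b i := by
      rw [← h2]
      exact Submodule.orthogonalProjectionOnto_mem_subspace_eq_self (b i)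
    show gC (W.orthogonalProjectionOnto (α i)) = 1
    rw [h1]
    simp [gC, g]
  have hFsum : ∀ c : Fin n → ℕ, F (∑ i, (c i : ℝ) • α i) = ∑ i, (c i : ℝ) := by
    intro c
    rw [map_sum]
    congr 1; funext i
    rw [map_smul, hFα i, smul_eq_mul, mul_one]
  have hFpos : ∀ (v : V) (c : Fin n → ℕ), v = ∑ i, (c i : ℝ) • α i → v ≠ 0 →
      1 ≤ F v := by
    intro v c hc hne
    have hcs : ∃ i, c i ≠ 0 := by
      by_contra h
      push_neg at h
      exact hne (by rw [hc]; simp [h])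
    obtain ⟨i, hi⟩ := hcs
    have h1 : (1 : ℝ) ≤ ∑ i, (c i : ℝ) := by
      have : (1 : ℕ) ≤ ∑ i, c i :=
        le_trans (Nat.one_le_iff_ne_zero.mpr hi)
          (Finset.single_le_sum (fun j _ => Nat.zero_le _) (Finset.mem_univ i))
      exact_mod_cast this
    rw [hc, hFsum]
    exact h1
  -- key step properties
  have key : ∀ mu lam : {v : V // ∀ i, 0 ≤ ⟪v, α i⟫},
      (∃ c : Fin n → ℕ, (lam : V) - (mu : V) = ∑ i, (c i : ℝ) • α i ∧
        (lam : V) - (mu : V) ≠ 0) →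
      ‖(mu : V)‖ ≤ ‖(lam : V)‖ ∧ F (mu : V) + 1 ≤ F (lam : V) := by
    rintro mu lam ⟨c, hc, hne⟩
    have hinner : ⟪(lam : V) - (mu : V), (lam : V) + (mu : V)⟫ =
        ‖(lam : V)‖ ^ 2 - ‖(mu : V)‖ ^ 2 := by
      rw [inner_sub_left, inner_add_right, inner_add_right,
        real_inner_comm (mu : V) (lam : V), ← real_inner_self_eq_norm_sq,
        ← real_inner_self_eq_norm_sq]
      ring
    have hpos : 0 ≤ ⟪(lam : V) - (mu : V), (lam : V) + (mu : V)⟫ := by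
      rw [hc, sum_inner]
      apply Finset.sum_nonneg
      intro i _
      rw [real_inner_smul_left, inner_add_right]
      have h1 : 0 ≤ ⟪(lam : V), α i⟫ := lam.2 i
      have h2 : 0 ≤ ⟪(mu : V), α i⟫ := mu.2 i
      rw [real_inner_comm] at h1 h2
      positivity
    have hnorm : ‖(mu : V)‖ ≤ ‖(lam : V)‖ := by
      nlinarith [norm_nonneg (mu : V), norm_nonneg (lam : V)]
    refine ⟨hnorm, ?_⟩
    have h1 : 1 ≤ F ((lam : V) - (mu : V)) := hFpos _ c hc hne
    rw [map_sub] at h1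
    linarith
  set r : {v : V // ∀ i, 0 ≤ ⟪v, α i⟫} → {v : V // ∀ i, 0 ≤ ⟪v, α i⟫} → Prop :=
    fun mu lam => ∃ c : Fin n → ℕ, (lam : V) - (mu : V) = ∑ i, (c i : ℝ) • α i ∧
        (lam : V) - (mu : V) ≠ 0 with hr
  show WellFounded r
  haveI : IsIrrefl _ r := by
    constructor
    rintro a ⟨c, _, hne⟩
    exact hne (sub_self _)
  haveI : IsTrans _ r := by
    constructor
    rintro a b c ⟨c1, h1, hn1⟩ ⟨c2, h2, hn2⟩
    refine ⟨fun i => c2 i + c1 i, ?_, ?_⟩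
    · have : (c : V) - (a : V) = ((c : V) - (b : V)) + ((b : V) - (a : V)) := by abel
      rw [this, h1, h2, ← Finset.sum_add_distrib]
      congr 1; funext i
      push_cast
      rw [add_smul]
    · intro hzero
      have e1 : 1 ≤ F ((b : V) - (a : V)) := hFpos _ c1 h1 hn1
      have e2 : 1 ≤ F ((c : V) - (b : V)) := hFpos _ c2 h2 hn2
      have : F ((c : V) - (a : V)) = F ((c : V) - (b : V)) + F ((b : V) - (a : V)) := by
        rw [← map_add]
        congr 1; abel
      rw [hzero, map_zero] at this
      linarith
  haveI : IsStrictOrder _ r := ⟨⟩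
  rw [RelEmbedding.wellFounded_iff_isEmpty]
  constructor
  intro e
  set f : ℕ → {v : V // ∀ i, 0 ≤ ⟪v, α i⟫} := ⇑e with hf
  have hstep : ∀ k : ℕ, ‖((f (k + 1)) : V)‖ ≤ ‖((f k) : V)‖ ∧
      F ((f (k + 1)) : V) + 1 ≤ F ((f k) : V) := by
    intro k
    exact key _ _ (e.map_rel_iff.mpr (Nat.lt_succ_self k))
  have hnorm : ∀ k : ℕ, ‖((f k) : V)‖ ≤ ‖((f 0) : V)‖ := by
    intro k
    induction k with
    | zero => exact le_refl _
    | succ m ih => exact le_trans (hstep m).1 ih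
  have hFle : ∀ k : ℕ, F ((f k) : V) + k ≤ F ((f 0) : V) := by
    intro k
    induction k with
    | zero => simp
    | succ m ih =>
      have := (hstep m).2
      push_cast
      push_cast at ih
      linarith
  have hbound : ∀ k : ℕ, -(‖F‖ * ‖((f 0) : V)‖) ≤ F ((f k) : V) := by
    intro k
    have h1 : |F ((f k) : V)| ≤ ‖F‖ * ‖((f k) : V)‖ := by
      calc |F ((f k) : V)| = ‖F ((f k) : V)‖ := rfl
        _ ≤ ‖F‖ * ‖((f k) : V)‖ := F.le_opNorm _
    have h2 : ‖F‖ * ‖((f k) : V)‖ ≤ ‖F‖ * ‖((f 0) : V)‖ :=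
      mul_le_mul_of_nonneg_left (hnorm k) (norm_nonneg F)
    have := (abs_le.mp (le_trans h1 h2)).1
    linarith
  obtain ⟨k, hk⟩ := exists_nat_gt (F ((f 0) : V) + ‖F‖ * ‖((f 0) : V)‖)
  have h3 := hFle k
  have h4 := hbound k
  linarith
end
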